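/- arXiv:funct-an/9501007 — 2 statements merged into one kernel-verified Lean document; each statement's English description precedes it below -/
import Mathlib

section
/- Let A be a C*-algebra and M a left Hilbert A-module. Then M is self-dual if and only if the unit ball of M is complete with respect to the right *-strict topology. Moreover, the linear hull of the completion of the unit ball of M with respect to the right *-strict topology coincides with the A-dual Banach A-module M′ of M. -/
open Filter Topology

/-- A C*-algebra `A` is a W*-algebra if it possesses a Banach space predual,
i.e. it is isometrically isomorphic (as a complex normed space) to the dual
of some complex normed space. -/
def IsWStarAlgebra (A : Type*) [CStarAlgebra A] : Prop :=
  ∃ (X : Type) (_ : NormedAddCommGroup X) (_ : NormedSpace ℂ X),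
    Nonempty (A ≃ₗᵢ[ℂ] StrongDual ℂ X)

/-- A (left) Hilbert module structure over a C*-algebra `A` on a normed
`A`-module `M`:  an `A`-valued inner product which is `A`-linear in the first
variable, positive definite, conjugate-symmetric, and inducing the norm. -/
structure LeftHilbertModule (A : Type*) [CStarAlgebra A] (M : Type*)
    [NormedAddCommGroup M] [Module A M] where
  inner : M → M → A
  inner_add_left : ∀ x y z : M, inner (x + y) z = inner x z + inner y z
  inner_smul_left : ∀ (a : A) (x y : M), inner (a • x) y = a * inner x y
  star_inner : ∀ x y : M, star (inner x y) = inner y x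
  inner_self_nonneg : ∀ x : M, ∃ a : A, inner x x = star a * a
  eq_zero_of_inner_self : ∀ x : M, inner x x = 0 → x = 0
  norm_eq : ∀ x : M, ‖x‖ = Real.sqrt ‖inner x x‖

/-- A map between normed `A`-modules is a bounded `A`-module map if it is
additive, `A`-homogeneous and norm-bounded. -/
def IsBddModuleMap (A : Type*) [CStarAlgebra A] {M N : Type*}
    [NormedAddCommGroup M] [Module A M] [NormedAddCommGroup N] [Module A N]
    (φ : M → N) : Prop :=
  (∀ x y : M, φ (x + y) = φ x + φ y) ∧ (∀ (a : A) (x : M), φ (a • x) = a • φ x) ∧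
    ∃ C : ℝ, ∀ x : M, ‖φ x‖ ≤ C * ‖x‖

namespace LeftHilbertModule

variable {A : Type*} [CStarAlgebra A] {M : Type*} [NormedAddCommGroup M] [Module A M]

/-- The orthogonal complement of a subset of a Hilbert `A`-module. -/
def orth (h : LeftHilbertModule A M) (S : Set M) : Set M :=
  {y : M | ∀ s ∈ S, h.inner y s = 0}

lemma inner_zero_left (h : LeftHilbertModule A M) (s : M) : h.inner 0 s = 0 := by
  have := h.inner_add_left 0 0 s
  rw [add_zero] at this
  exact (left_eq_add.mp this)

/-- The orthogonal complement of a subset, as a submodule. -/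
def orthSubmodule (h : LeftHilbertModule A M) (S : Set M) : Submodule A M where
  carrier := h.orth S
  add_mem' := by
    intro y z hy hz s hs
    rw [h.inner_add_left, hy s hs, hz s hs, add_zero]
  zero_mem' := fun s _ => h.inner_zero_left s
  smul_mem' := by
    intro a y hy s hs
    rw [h.inner_smul_left, hy s hs, mul_zero]

/-- A subset `S` of a Hilbert `A`-module is an orthogonal direct summand if
every element of `M` decomposes as a sum of an element of `S` and an element of
`S^⊥`. -/
def IsOrthoSummand (h : LeftHilbertModule A M) (S : Set M) : Prop :=
  ∀ x : M, ∃ u ∈ S, ∃ v ∈ h.orth S, x = u + v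

/-- Self-duality: every bounded `A`-linear map `M → A` is given by the inner
product with some element of `M`. -/
def SelfDual (h : LeftHilbertModule A M) : Prop :=
  ∀ r : M → A, IsBddModuleMap A r → ∃ x : M, ∀ y : M, r y = h.inner y x

/-- The restriction of a Hilbert `A`-module structure to a submodule. -/
def restrict (h : LeftHilbertModule A M) (N : Submodule A M) :
    LeftHilbertModule A N where
  inner x y := h.inner x y
  inner_add_left x y z := by
    show h.inner ((x + y : N) : M) z = _
    rw [Submodule.coe_add, h.inner_add_left]
  inner_smul_left a x y := by
    show h.inner ((a • x : N) : M) y = _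
    rw [Submodule.coe_smul, h.inner_smul_left]
  star_inner x y := h.star_inner x y
  inner_self_nonneg x := h.inner_self_nonneg x
  eq_zero_of_inner_self x hx := Subtype.ext (h.eq_zero_of_inner_self x hx)
  norm_eq x := h.norm_eq x

end LeftHilbertModule

/-- A unital C*-algebra as a (left) Hilbert module over itself, with the
standard inner product `⟨a, b⟩ = a * b*`. -/
noncomputable def selfModule (A : Type*) [CStarAlgebra A] : LeftHilbertModule A A where
  inner a b := a * star b
  inner_add_left x y z := add_mul x y (star z)
  inner_smul_left a x y := by show (a • x) * star y = a * (x * star y); rw [smul_eq_mul, mul_assoc]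
  star_inner x y := by rw [star_mul, star_star]
  inner_self_nonneg x := ⟨star x, by rw [star_star]⟩
  eq_zero_of_inner_self x hx := by
    have hx' : x * star x = 0 := hx
    have h1 : ‖x‖ * ‖x‖ = 0 := by rw [← CStarRing.norm_self_mul_star, hx', norm_zero]
    have h2 : ‖x‖ = 0 := by
      rcases mul_self_eq_zero.mp h1 with h
      exact h
    exact norm_eq_zero.mp h2
  norm_eq x := by
    show ‖x‖ = Real.sqrt ‖x * star x‖
    rw [CStarRing.norm_self_mul_star, Real.sqrt_mul_self (norm_nonneg x)]

/-- The kernel of a bounded `A`-module map, as a submodule. -/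
def kerSubmodule (A : Type*) [CStarAlgebra A] {M N : Type*}
    [NormedAddCommGroup M] [Module A M] [NormedAddCommGroup N] [Module A N]
    (φ : M → N) (hφ : IsBddModuleMap A φ) : Submodule A M where
  carrier := {x : M | φ x = 0}
  add_mem' := by
    intro y z hy hz
    show φ (y + z) = 0
    rw [hφ.1, hy, hz, add_zero]
  zero_mem' := by
    show φ 0 = 0
    have := hφ.1 0 0
    rw [add_zero] at this
    exact (left_eq_add.mp this)
  smul_mem' := by
    intro a y hy
    show φ (a • y) = 0
    rw [hφ.2.1, hy, smul_zero]

namespace LeftHilbertModule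

variable {A : Type*} [CStarAlgebra A] {M : Type*} [NormedAddCommGroup M] [Module A M]

attribute [local instance] CStarAlgebra.spectralOrder CStarAlgebra.spectralOrderedRing

lemma inner_zero_left' (h : LeftHilbertModule A M) (s : M) : h.inner 0 s = 0 := by
  have := h.inner_add_left 0 0 s
  rw [add_zero] at this
  exact (left_eq_add.mp this)

lemma inner_zero_right' (h : LeftHilbertModule A M) (s : M) : h.inner s 0 = 0 := by
  rw [← h.star_inner, inner_zero_left', star_zero]

lemma inner_add_right' (h : LeftHilbertModule A M) (x y z : M) :
    h.inner x (y + z) = h.inner x y + h.inner x z := by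
  rw [← h.star_inner, h.inner_add_left, star_add, h.star_inner, h.star_inner]

lemma inner_smul_right' (h : LeftHilbertModule A M) (a : A) (x y : M) :
    h.inner x (a • y) = h.inner x y * star a := by
  rw [← h.star_inner, h.inner_smul_left, star_mul, h.star_inner]

lemma inner_self_nonneg' (h : LeftHilbertModule A M) (x : M) : 0 ≤ h.inner x x := by
  obtain ⟨a, ha⟩ := h.inner_self_nonneg x
  rw [ha]; exact star_mul_self_nonneg a

lemma isSelfAdjoint_inner_self (h : LeftHilbertModule A M) (x : M) :
    IsSelfAdjoint (h.inner x x) := h.star_inner x x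

lemma norm_inner_self (h : LeftHilbertModule A M) (x : M) : ‖h.inner x x‖ = ‖x‖ ^ 2 := by
  rw [h.norm_eq x, Real.sq_sqrt (norm_nonneg _)]

lemma inner_sub_left' (h : LeftHilbertModule A M) (x y z : M) :
    h.inner (x - y) z = h.inner x z - h.inner y z := by
  have := h.inner_add_left (x - y) y z
  rw [sub_add_cancel] at this
  rw [eq_sub_iff_add_eq, ← this]

lemma inner_sub_right' (h : LeftHilbertModule A M) (x y z : M) :
    h.inner x (y - z) = h.inner x y - h.inner x z := by
  rw [← h.star_inner, inner_sub_left', star_sub, h.star_inner, h.star_inner]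

/-- Cauchy–Schwarz, operator form. -/
lemma cs_op (h : LeftHilbertModule A M) (x y : M) :
    h.inner x y * h.inner y x ≤ (‖y‖ ^ 2) • h.inner x x := by
  rcases eq_or_ne y 0 with rfl | hy
  · rw [h.inner_zero_right', zero_mul]
    exact smul_nonneg (by positivity) (h.inner_self_nonneg' x)
  · have hy2 : (0:ℝ) < ‖y‖ ^ 2 := pow_pos (norm_pos_iff.mpr hy) 2
    set T := h.inner x y with hT
    set t : ℝ := (‖y‖ ^ 2)⁻¹ with ht
    have htpos : 0 < t := by rw [ht]; exact inv_pos.mpr hy2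
    set a : A := t • T with ha
    set U : A := T * star T with hU
    have hyx : h.inner y x = star T := by rw [← h.star_inner x y]
    have expand : h.inner ((a • y) - x) ((a • y) - x)
        = a * (h.inner y y * star a - star T) - (T * star a - h.inner x x) := by
      rw [h.inner_sub_left', h.inner_sub_right', h.inner_sub_right', h.inner_smul_left,
        h.inner_smul_left, h.inner_smul_right', h.inner_smul_right']
      rw [hyx, ← hT, mul_sub]
    have key : (0:A) ≤ a * (h.inner y y * star a - star T) - (T * star a - h.inner x x) := by
      rw [← expand]; exact h.inner_self_nonneg' _
    have e1 : a * (h.inner y y * star a) ≤ t • U := by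
      have hconj : a * h.inner y y * star a ≤ ‖h.inner y y‖ • (a * star a) :=
        CStarAlgebra.star_right_conjugate_le_norm_smul (h.isSelfAdjoint_inner_self y)
      have : ‖h.inner y y‖ • (a * star a) = t • U := by
        rw [h.norm_inner_self, ha, star_smul, star_trivial, smul_mul_assoc, mul_smul_comm,
          smul_smul, smul_smul, ← hU]
        congr 1
        rw [ht]
        field_simp
      rw [← this, ← mul_assoc]
      exact hconj
    have e2 : a * star T = t • U := by rw [ha, smul_mul_assoc, hU]
    have e3 : T * star a = t • U := by
      rw [ha, star_smul, star_trivial, mul_smul_comm, hU]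
    have key2 : (0:A) ≤ h.inner x x - t • U := by
      have step : a * (h.inner y y * star a - star T) - (T * star a - h.inner x x)
          ≤ h.inner x x - t • U := by
        rw [mul_sub, e2, e3]
        have := sub_le_sub_right (sub_le_sub_right e1 (t • U)) (t • U - h.inner x x)
        calc a * (h.inner y y * star a) - t • U - (t • U - h.inner x x)
            ≤ t • U - t • U - (t • U - h.inner x x) := this
          _ = h.inner x x - t • U := by abel
      exact le_trans key step
    rw [sub_nonneg] at key2
    have final := smul_le_smul_of_nonneg_left key2 (le_of_lt hy2)
    rw [smul_smul] at final
    have hts : ‖y‖^2 * t = 1 := by rw [ht]; field_simp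
    rw [hts, one_smul] at final
    rw [hyx]
    exact final

lemma norm_inner_le (h : LeftHilbertModule A M) (x y : M) :
    ‖h.inner x y‖ ≤ ‖x‖ * ‖y‖ := by
  have hpos : 0 ≤ h.inner x y * h.inner y x := by
    rw [← h.star_inner x y]; exact mul_star_self_nonneg _
  have h1 : ‖h.inner x y * h.inner y x‖ ≤ ‖(‖y‖^2 : ℝ) • h.inner x x‖ := by
    exact CStarAlgebra.norm_le_norm_of_nonneg_of_le hpos (h.cs_op x y)
  have h1' : ‖(‖y‖^2 : ℝ) • h.inner x x‖ = ‖y‖^2 * ‖x‖^2 := by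
    rw [norm_smul, h.norm_inner_self]
    simp [abs_of_nonneg (sq_nonneg ‖y‖)]
  have h2 : ‖h.inner x y‖ ^ 2 = ‖h.inner x y * h.inner y x‖ := by
    rw [← h.star_inner x y, CStarRing.norm_self_mul_star]
    ring
  have h3 : ‖h.inner x y‖ ^ 2 ≤ (‖x‖ * ‖y‖) ^ 2 := by
    rw [h2]
    calc ‖h.inner x y * h.inner y x‖ ≤ ‖y‖^2 * ‖x‖^2 := h1'.symm ▸ h1
      _ = (‖x‖ * ‖y‖)^2 := by ring
  nlinarith [norm_nonneg (h.inner x y), mul_nonneg (norm_nonneg x) (norm_nonneg y)]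
end LeftHilbertModule

namespace LeftHilbertModule
section KeyDev
variable {A : Type*} [CStarAlgebra A] {M : Type*} [NormedAddCommGroup M] [Module A M]

attribute [local instance] CStarAlgebra.spectralOrder CStarAlgebra.spectralOrderedRing

/-- finite `A`-valued inner product of coefficient functions -/
noncomputable def ipF (F : Finset M) (u v : M → A) : A := ∑ y ∈ F, star (u y) * v y

/-- combination element -/
noncomputable def WF (h : LeftHilbertModule A M) (F : Finset M) (c : M → A) : M :=
  ∑ y ∈ F, star (c y) • y

/-- Gram operator -/
noncomputable def PhiF (h : LeftHilbertModule A M) (F : Finset M) (c : M → A) : M → A :=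
  fun y => ∑ y' ∈ F, h.inner y y' * c y'

variable (h : LeftHilbertModule A M) (F : Finset M)

lemma inner_sum_left' {ι : Type*} (s : Finset ι) (f : ι → M) (z : M) :
    h.inner (∑ i ∈ s, f i) z = ∑ i ∈ s, h.inner (f i) z :=
  map_sum (AddMonoidHom.mk' (fun m => h.inner m z) (fun a b => h.inner_add_left a b z)) f s

lemma inner_sum_right' {ι : Type*} (s : Finset ι) (f : ι → M) (z : M) :
    h.inner z (∑ i ∈ s, f i) = ∑ i ∈ s, h.inner z (f i) := by
  rw [← h.star_inner, inner_sum_left', star_sum]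
  exact Finset.sum_congr rfl fun i _ => h.star_inner _ _

lemma inner_WF_right (c : M → A) (z : M) :
    h.inner z (h.WF F c) = h.PhiF F c z := by
  rw [WF, inner_sum_right', PhiF]
  exact Finset.sum_congr rfl fun y _ => by
    rw [h.inner_smul_right', star_star]

lemma inner_WF_left (c : M → A) (z : M) :
    h.inner (h.WF F c) z = ∑ y ∈ F, star (c y) * h.inner y z := by
  rw [WF, inner_sum_left']
  exact Finset.sum_congr rfl fun y _ => by rw [h.inner_smul_left]

lemma ip_c_Phi (c c' : M → A) :
    ipF F c (h.PhiF F c') = h.inner (h.WF F c) (h.WF F c') := by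
  rw [inner_WF_left, ipF]
  exact Finset.sum_congr rfl fun y _ => by rw [inner_WF_right]

lemma ip_star (u v : M → A) : star (ipF F u v) = ipF F v u := by
  rw [ipF, ipF, star_sum]
  exact Finset.sum_congr rfl fun y _ => by rw [star_mul, star_star]

lemma ip_nonneg (u : M → A) : 0 ≤ ipF F u u :=
  Finset.sum_nonneg fun y _ => star_mul_self_nonneg (u y)

lemma ip_add_right (u v w : M → A) :
    ipF F u (v + w) = ipF F u v + ipF F u w := by
  simp only [ipF, Pi.add_apply, ← Finset.sum_add_distrib]
  exact Finset.sum_congr rfl fun y _ => mul_add _ _ _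

lemma ip_add_left (u v w : M → A) :
    ipF F (u + v) w = ipF F u w + ipF F v w := by
  simp only [ipF, Pi.add_apply, ← Finset.sum_add_distrib]
  exact Finset.sum_congr rfl fun y _ => by rw [star_add, add_mul]

lemma ip_sub_right (u v w : M → A) :
    ipF F u (v - w) = ipF F u v - ipF F u w := by
  simp only [ipF, Pi.sub_apply, ← Finset.sum_sub_distrib]
  exact Finset.sum_congr rfl fun y _ => mul_sub _ _ _

lemma ip_sub_left (u v w : M → A) :
    ipF F (u - v) w = ipF F u w - ipF F v w := by
  simp only [ipF, Pi.sub_apply, ← Finset.sum_sub_distrib]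
  exact Finset.sum_congr rfl fun y _ => by rw [star_sub, sub_mul]

lemma ip_smul_right (t : ℝ) (u v : M → A) :
    ipF F u (t • v) = t • ipF F u v := by
  simp only [ipF, Pi.smul_apply, Finset.smul_sum]
  exact Finset.sum_congr rfl fun y _ => mul_smul_comm t _ _

lemma ip_smul_left (t : ℝ) (u v : M → A) :
    ipF F (t • u) v = t • ipF F u v := by
  simp only [ipF, Pi.smul_apply, Finset.smul_sum]
  exact Finset.sum_congr rfl fun y _ => by
    rw [star_smul, star_trivial t, smul_mul_assoc]

lemma entry_le_ip (u : M → A) {y : M} (hy : y ∈ F) :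
    star (u y) * u y ≤ ipF F u u := by
  classical
  rw [ipF, ← Finset.add_sum_erase F _ hy]
  exact le_add_of_nonneg_right (Finset.sum_nonneg fun z _ => star_mul_self_nonneg (u z))

lemma norm_entry_sq_le (u : M → A) {y : M} (hy : y ∈ F) :
    ‖u y‖ ^ 2 ≤ ‖ipF F u u‖ := by
  have h1 : ‖star (u y) * u y‖ ≤ ‖ipF F u u‖ :=
    CStarAlgebra.norm_le_norm_of_nonneg_of_le (star_mul_self_nonneg _) (entry_le_ip F u hy)
  rwa [CStarRing.norm_star_mul_self, ← pow_two] at h1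

lemma norm_ip_le (u v : M → A) : ‖ipF F u v‖ ≤ ∑ y ∈ F, ‖u y‖ * ‖v y‖ := by
  refine le_trans (norm_sum_le _ _) (Finset.sum_le_sum fun y _ => ?_)
  calc ‖star (u y) * v y‖ ≤ ‖star (u y)‖ * ‖v y‖ := norm_mul_le _ _
    _ = ‖u y‖ * ‖v y‖ := by rw [norm_star]

/-- the regularized Gram operator -/
noncomputable def TF (h : LeftHilbertModule A M) (F : Finset M) (e : ℝ) (c : M → A) : M → A :=
  h.PhiF F c + e • c

lemma ip_Phi_Phi_le (c : M → A) :
    ipF F (h.PhiF F c) (h.PhiF F c)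
      ≤ (∑ y ∈ F, ‖y‖ ^ 2) • h.inner (h.WF F c) (h.WF F c) := by
  have e1 : ipF F (h.PhiF F c) (h.PhiF F c)
      = ∑ y ∈ F, h.inner (h.WF F c) y * h.inner y (h.WF F c) := by
    rw [ipF]
    refine Finset.sum_congr rfl fun y _ => ?_
    rw [← inner_WF_right h F c y, h.star_inner y (h.WF F c)]
  rw [e1]
  calc ∑ y ∈ F, h.inner (h.WF F c) y * h.inner y (h.WF F c)
      ≤ ∑ y ∈ F, (‖y‖^2) • h.inner (h.WF F c) (h.WF F c) :=
        Finset.sum_le_sum fun y _ => h.cs_op (h.WF F c) y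
    _ = (∑ y ∈ F, ‖y‖ ^ 2) • h.inner (h.WF F c) (h.WF F c) := (Finset.sum_smul).symm

/-- ⟪c, Tc⟫ -/
lemma ip_c_T (e : ℝ) (c : M → A) :
    ipF F c (h.TF F e c) = h.inner (h.WF F c) (h.WF F c) + e • ipF F c c := by
  rw [TF, ip_add_right, ip_c_Phi, ip_smul_right]

lemma ip_T_c (e : ℝ) (c : M → A) :
    ipF F (h.TF F e c) c = h.inner (h.WF F c) (h.WF F c) + e • ipF F c c := by
  rw [← ip_star, ip_c_T, star_add, star_smul, star_trivial e, ip_star F c c, h.star_inner]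

lemma ip_T_T_le (e : ℝ) (c : M → A) :
    ipF F (h.TF F e c) (h.TF F e c)
      ≤ ((∑ y ∈ F, ‖y‖ ^ 2) + 2*e) • h.inner (h.WF F c) (h.WF F c)
        + (e*e) • ipF F c c := by
  have h1 : ipF F (h.PhiF F c) c = h.inner (h.WF F c) (h.WF F c) := by
    rw [← ip_star, ip_c_Phi, h.star_inner]
  have expand : ipF F (h.TF F e c) (h.TF F e c)
      = ipF F (h.PhiF F c) (h.PhiF F c)
        + (2*e) • h.inner (h.WF F c) (h.WF F c) + (e*e) • ipF F c c := by
    rw [show h.TF F e c = h.PhiF F c + e • c from rfl,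
      ip_add_right F (h.PhiF F c + e • c) (h.PhiF F c) (e • c),
      ip_add_left F (h.PhiF F c) (e • c) (h.PhiF F c),
      ip_add_left F (h.PhiF F c) (e • c) (e • c),
      ip_smul_left F e c (h.PhiF F c), ip_smul_right F e (h.PhiF F c) c,
      ip_smul_left F e c (e • c), ip_smul_right F e c c,
      ip_c_Phi h F c c, h1, smul_smul]
    module
  rw [expand]
  have h2 := add_le_add_left (add_le_add_left (ip_Phi_Phi_le h F c)
    ((2*e) • h.inner (h.WF F c) (h.WF F c))) ((e*e) • ipF F c c)
  refine le_trans h2 (le_of_eq ?_)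
  module

/-- contraction estimate -/
lemma contract (e : ℝ) (he : 0 < e) (c : M → A) :
    ipF F (c - ((∑ y ∈ F, ‖y‖ ^ 2) + 2*e + 1)⁻¹ • h.TF F e c)
        (c - ((∑ y ∈ F, ‖y‖ ^ 2) + 2*e + 1)⁻¹ • h.TF F e c)
      ≤ ((1 - ((∑ y ∈ F, ‖y‖ ^ 2) + 2*e + 1)⁻¹ * e)^2) • ipF F c c := by
  set L : ℝ := ∑ y ∈ F, ‖y‖ ^ 2 with hL
  have hL0 : 0 ≤ L := Finset.sum_nonneg fun y _ => sq_nonneg _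
  set t : ℝ := (L + 2*e + 1)⁻¹ with ht
  have hden : (0:ℝ) < L + 2*e + 1 := by nlinarith
  have ht0 : 0 < t := inv_pos.mpr hden
  set g : A := h.inner (h.WF F c) (h.WF F c) with hg
  have hg0 : 0 ≤ g := h.inner_self_nonneg' _
  set P : A := ipF F c c with hP
  have hP0 : 0 ≤ P := ip_nonneg F c
  have E1 : ipF F (c - t • h.TF F e c) (c - t • h.TF F e c)
      = P - t • (g + e • P) - (t • (g + e • P) - (t*t) • ipF F (h.TF F e c) (h.TF F e c)) := by
    rw [ip_sub_left, ip_sub_right, ip_sub_right, ip_smul_left, ip_smul_right, ip_smul_right,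
      ip_smul_left, smul_smul, ip_c_T, ip_T_c, ← hg, ← hP]
  rw [E1]
  have hTT := ip_T_T_le h F e c
  rw [← hg, ← hP, ← hL] at hTT
  have step1 : P - t • (g + e • P) - (t • (g + e • P) - (t*t) • ipF F (h.TF F e c) (h.TF F e c))
      ≤ P - t • (g + e • P) - (t • (g + e • P) - (t*t) • ((L + 2*e) • g + (e*e) • P)) := by
    have h3 : (t*t) • ipF F (h.TF F e c) (h.TF F e c) ≤ (t*t) • ((L + 2*e) • g + (e*e) • P) :=
      smul_le_smul_of_nonneg_left hTT (by positivity)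
    exact sub_le_sub_left (sub_le_sub_left h3 _) _
  refine le_trans step1 ?_
  have E2 : P - t • (g + e • P) - (t • (g + e • P) - (t*t) • ((L + 2*e) • g + (e*e) • P))
      = ((1 - t*e)^2) • P + (t*t*(L + 2*e) - 2*t) • g := by module
  rw [E2]
  have hcoef : t*t*(L + 2*e) - 2*t ≤ 0 := by
    have htle : t * (L + 2*e) ≤ 1 := by
      rw [ht, inv_mul_le_iff₀ hden]
      nlinarith
    nlinarith
  have hterm : (t*t*(L + 2*e) - 2*t) • g ≤ 0 := by
    have h5 : (0:ℝ) ≤ -(t*t*(L + 2*e) - 2*t) := by linarith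
    have h4 : 0 ≤ (-(t*t*(L + 2*e) - 2*t)) • g := smul_nonneg h5 hg0
    rw [neg_smul] at h4
    exact neg_nonneg.mp h4
  calc ((1 - t*e)^2) • P + (t*t*(L + 2*e) - 2*t) • g
      ≤ ((1 - t*e)^2) • P + 0 := add_le_add_right hterm _
    _ = ((1 - t*e)^2) • P := add_zero _

end KeyDev
end LeftHilbertModule

namespace LeftHilbertModule
section KeyDev2
variable {A : Type*} [CStarAlgebra A] {M : Type*} [NormedAddCommGroup M] [Module A M]

attribute [local instance] CStarAlgebra.spectralOrder CStarAlgebra.spectralOrderedRing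

variable (h : LeftHilbertModule A M) (F : Finset M)

lemma sq_le_imp {a b : ℝ} (hb : 0 ≤ b) (hab : a^2 ≤ b^2) (ha : 0 ≤ a) : a ≤ b := by nlinarith

lemma PhiF_add (u v : M → A) : h.PhiF F (u + v) = h.PhiF F u + h.PhiF F v := by
  funext y
  simp only [PhiF, Pi.add_apply, mul_add, Finset.sum_add_distrib]

lemma PhiF_smul (t : ℝ) (v : M → A) : h.PhiF F (t • v) = t • h.PhiF F v := by
  funext y
  simp only [PhiF, Pi.smul_apply, Finset.smul_sum, mul_smul_comm]

lemma TF_add_smul (e t : ℝ) (u v : M → A) :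
    h.TF F e (u + t • v) = h.TF F e u + t • h.TF F e v := by
  have : h.TF F e (u + t • v) = h.PhiF F (u + t • v) + e • (u + t • v) := rfl
  rw [this, PhiF_add, PhiF_smul]
  funext y
  simp only [TF, Pi.add_apply, Pi.smul_apply]
  module

lemma TF_zero (e : ℝ) : h.TF F e 0 = 0 := by
  funext y
  simp only [TF, PhiF, Pi.add_apply, Pi.smul_apply, Pi.zero_apply, mul_zero,
    Finset.sum_const_zero, smul_zero, add_zero]

/-- Richardson iteration for the regularized Gram equation. -/
noncomputable def iterSeq (h : LeftHilbertModule A M) (F : Finset M) (e t : ℝ) (r : M → A) :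
    ℕ → (M → A)
  | 0 => 0
  | (k+1) => iterSeq h F e t r k + t • (r - h.TF F e (iterSeq h F e t r k))

lemma rho_succ (e t : ℝ) (r : M → A) (k : ℕ) :
    r - h.TF F e (iterSeq h F e t r (k+1))
      = (r - h.TF F e (iterSeq h F e t r k))
        - t • h.TF F e (r - h.TF F e (iterSeq h F e t r k)) := by
  rw [iterSeq, TF_add_smul]
  abel

lemma rho_zero (e t : ℝ) (r : M → A) :
    r - h.TF F e (iterSeq h F e t r 0) = r := by
  rw [iterSeq, TF_zero, sub_zero]

/-- geometric decay of the residuals -/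
lemma rho_decay (e : ℝ) (he : 0 < e) (r : M → A) (k : ℕ) :
    ipF F (r - h.TF F e (iterSeq h F e ((∑ y ∈ F, ‖y‖ ^ 2) + 2*e + 1)⁻¹ r k))
        (r - h.TF F e (iterSeq h F e ((∑ y ∈ F, ‖y‖ ^ 2) + 2*e + 1)⁻¹ r k))
      ≤ (((1 - ((∑ y ∈ F, ‖y‖ ^ 2) + 2*e + 1)⁻¹ * e)^2)^k) • ipF F r r := by
  set t : ℝ := ((∑ y ∈ F, ‖y‖ ^ 2) + 2*e + 1)⁻¹ with ht
  set q2 : ℝ := (1 - t * e)^2 with hq2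
  induction k with
  | zero =>
    rw [rho_zero, pow_zero, one_smul]
  | succ k ih =>
    rw [rho_succ]
    refine le_trans (contract h F e he _) ?_
    have hq2nn : 0 ≤ q2 := sq_nonneg _
    calc q2 • ipF F (r - h.TF F e (iterSeq h F e t r k))
            (r - h.TF F e (iterSeq h F e t r k))
        ≤ q2 • ((q2^k) • ipF F r r) := smul_le_smul_of_nonneg_left ih hq2nn
      _ = (q2^(k+1)) • ipF F r r := by rw [smul_smul, ← pow_succ']

end KeyDev2
end LeftHilbertModule

namespace LeftHilbertModule
section KeyDev3
variable {A : Type*} [CStarAlgebra A] {M : Type*} [NormedAddCommGroup M] [Module A M]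

attribute [local instance] CStarAlgebra.spectralOrder CStarAlgebra.spectralOrderedRing

set_option maxHeartbeats 2000000 in
/-- **Key approximation lemma**: a bounded module functional can be approximated,
uniformly on any finite set, by inner products with elements of norm at most `C + ε`. -/
lemma key_approx (h : LeftHilbertModule A M) (r : M → A)
    (hadd : ∀ x y, r (x + y) = r x + r y) (hsm : ∀ (a : A) (x : M), r (a • x) = a * r x)
    (C : ℝ) (hC0 : 0 ≤ C) (hC : ∀ x, ‖r x‖ ≤ C * ‖x‖)
    (F : Finset M) {ε : ℝ} (hε : 0 < ε) :
    ∃ x : M, ‖x‖ ≤ C + ε ∧ ∀ y ∈ F, ‖h.inner y x - r y‖ ≤ ε := by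
  classical
  -- regularization parameter
  have hC2 : (0:ℝ) < C + 2 := by linarith only [hC0]
  obtain ⟨e, he, he1, hsqrt_e⟩ :
      ∃ e : ℝ, 0 < e ∧ e ≤ 1 ∧ Real.sqrt e ≤ ε / (2*(C+2)) := by
    refine ⟨min 1 ((ε / (2*(C+2)))^2), lt_min one_pos (by positivity), min_le_left _ _, ?_⟩
    calc Real.sqrt (min 1 ((ε / (2*(C+2)))^2))
        ≤ Real.sqrt ((ε/(2*(C+2)))^2) := Real.sqrt_le_sqrt (min_le_right _ _)
      _ = ε/(2*(C+2)) := Real.sqrt_sq (by positivity)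
  set L : ℝ := ∑ y ∈ F, ‖y‖ ^ 2 with hL
  have hL0 : 0 ≤ L := Finset.sum_nonneg fun y _ => sq_nonneg _
  have hden : (0:ℝ) < L + 2*e + 1 := by linarith only [hL0, he]
  set t : ℝ := (L + 2*e + 1)⁻¹ with ht
  have ht0 : 0 < t := inv_pos.mpr hden
  set q : ℝ := 1 - t * e with hq
  have hte : t * e < 1 := by
    rw [ht, inv_mul_lt_iff₀ hden]
    linarith only [hL0, he]
  have hq0 : 0 < q := by rw [hq]; linarith only [hte]
  have hq1 : q < 1 := by
    have := mul_pos ht0 he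
    rw [hq]; linarith only [this]
  set N : ℝ := ‖ipF F r r‖ with hN
  have hN0 : 0 ≤ N := norm_nonneg _
  set SN : ℝ := Real.sqrt N with hSN
  have hSN0 : 0 ≤ SN := Real.sqrt_nonneg _
  have hSN2 : SN^2 = N := Real.sq_sqrt hN0
  -- residual decay
  have hrho_ip : ∀ k : ℕ,
      ipF F (r - h.TF F e (iterSeq h F e t r k)) (r - h.TF F e (iterSeq h F e t r k))
        ≤ ((q^2)^k) • ipF F r r := by
    intro k
    have hd := rho_decay h F e he r k
    rw [← hL, ← ht] at hd
    have hqq : ((1 - t*e)^2)^k = (q^2)^k := by rw [hq]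
    rwa [hqq] at hd
  have hrho_entry : ∀ k : ℕ, ∀ y ∈ F,
      ‖(r - h.TF F e (iterSeq h F e t r k)) y‖ ≤ q^k * SN := by
    intro k y hy
    have h1 := norm_entry_sq_le F (r - h.TF F e (iterSeq h F e t r k)) hy
    have h2 : ‖ipF F (r - h.TF F e (iterSeq h F e t r k))
        (r - h.TF F e (iterSeq h F e t r k))‖ ≤ (q^2)^k * N := by
      have hnn := ip_nonneg (A := A) F (r - h.TF F e (iterSeq h F e t r k))
      have h3 := CStarAlgebra.norm_le_norm_of_nonneg_of_le hnn (hrho_ip k)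
      calc ‖ipF F (r - h.TF F e (iterSeq h F e t r k))
            (r - h.TF F e (iterSeq h F e t r k))‖
          ≤ ‖((q^2)^k) • ipF F r r‖ := h3
        _ = (q^2)^k * N := by
            rw [norm_smul, ← hN, Real.norm_eq_abs, abs_of_nonneg (by positivity)]
    have hsq : (q^k * SN)^2 = (q^2)^k * N := by
      rw [mul_pow, ← pow_mul, ← pow_mul, mul_comm k 2, hSN2]
    refine sq_le_imp (by positivity) ?_ (norm_nonneg _)
    rw [hsq]
    exact le_trans h1 h2
  -- entry bound on the iterates
  have hc_entry : ∀ k : ℕ, ∀ y ∈ F,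
      ‖iterSeq h F e t r k y‖ ≤ (SN/e) * (1 - q^k) := by
    intro k
    induction k with
    | zero =>
      intro y hy
      simp only [iterSeq, Pi.zero_apply, norm_zero, pow_zero, sub_self, mul_zero, le_refl]
    | succ k ih =>
      intro y hy
      have hstep : iterSeq h F e t r (k+1) y
          = iterSeq h F e t r k y + t • ((r - h.TF F e (iterSeq h F e t r k)) y) := by
        rw [iterSeq]
        simp only [Pi.add_apply, Pi.smul_apply]
      rw [hstep]
      have h1 : ‖iterSeq h F e t r k y + t • ((r - h.TF F e (iterSeq h F e t r k)) y)‖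
          ≤ ‖iterSeq h F e t r k y‖ + t * ‖(r - h.TF F e (iterSeq h F e t r k)) y‖ := by
        refine le_trans (norm_add_le _ _) ?_
        rw [norm_smul, Real.norm_eq_abs, abs_of_nonneg ht0.le]
      refine le_trans h1 ?_
      have h2 := ih y hy
      have h3 := hrho_entry k y hy
      have h4 : t * ‖(r - h.TF F e (iterSeq h F e t r k)) y‖ ≤ t * (q^k * SN) :=
        mul_le_mul_of_nonneg_left h3 ht0.le
      have harith : (SN/e) * (1 - q^k) + t * (q^k * SN) = (SN/e) * (1 - q^(k+1)) := by
        have hQ : q^(k+1) = q^k * q := pow_succ q k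
        rw [hQ, hq]
        field_simp
        ring
      linarith only [h2, h4, harith]
  have hc_entry' : ∀ k : ℕ, ∀ y ∈ F, ‖iterSeq h F e t r k y‖ ≤ SN/e := by
    intro k y hy
    have h1 := hc_entry k y hy
    have h2 : 0 ≤ (SN/e) * q^k := mul_nonneg (by positivity) (by positivity)
    have h3 : (SN/e) * (1 - q^k) = SN/e - (SN/e) * q^k := by ring
    linarith only [h1, h2, h3]
  -- choice of the number of iterations
  set m : ℝ := min 1 ε with hm
  have hm0 : 0 < m := lt_min one_pos hε
  set τ1 : ℝ := (ε/2)/(SN+1) with hτ1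
  set τ2 : ℝ := m^2/((F.card : ℝ)*(SN/e)*SN + 1) with hτ2
  have hcard0 : (0:ℝ) ≤ (F.card : ℝ)*(SN/e)*SN := by positivity
  have hτ1p : 0 < τ1 := by rw [hτ1]; positivity
  have hτ2p : 0 < τ2 := by rw [hτ2]; positivity
  obtain ⟨k, hk⟩ := exists_pow_lt_of_lt_one (lt_min hτ1p hτ2p) hq1
  have hqknn : (0:ℝ) ≤ q^k := by positivity
  have hk1 : q^k * SN ≤ ε/2 := by
    have hkk : q^k ≤ τ1 := le_trans hk.le (min_le_left _ _)
    have hmul : 0 ≤ (τ1 - q^k) * SN := mul_nonneg (by linarith only [hkk]) hSN0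
    have hτ1e : τ1 * (SN+1) = ε/2 := by
      rw [hτ1]; field_simp; try ring
    nlinarith only [hmul, hτ1p, hτ1e, hSN0]
  have hk2 : (F.card : ℝ)*(SN/e)*SN * q^k ≤ m^2 := by
    have hkk : q^k ≤ τ2 := le_trans hk.le (min_le_right _ _)
    have hmul : 0 ≤ (τ2 - q^k) * ((F.card : ℝ)*(SN/e)*SN) :=
      mul_nonneg (by linarith only [hkk]) hcard0
    have hτ2e : τ2 * ((F.card : ℝ)*(SN/e)*SN + 1) = m^2 := by
      rw [hτ2]; field_simp; try ring
    nlinarith only [hmul, hτ2p, hτ2e, hcard0]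
  -- the approximant
  set c : M → A := iterSeq h F e t r k with hc
  set ρ : M → A := r - h.TF F e c with hρ
  set x : M := h.WF F c with hx
  set g : A := h.inner x x with hgdef
  set P : A := ipF F c c with hPdef
  have hg0 : 0 ≤ g := h.inner_self_nonneg' _
  have hP0 : 0 ≤ P := ip_nonneg F c
  set s : A := g + e • P with hsdef
  have hs0 : 0 ≤ s := add_nonneg hg0 (smul_nonneg he.le hP0)
  -- the functional applied to the approximant
  have id_rx : r x = ipF F c r := by
    have hms := map_sum (AddMonoidHom.mk' r hadd) (fun y => star (c y) • y) F
    simp only [AddMonoidHom.mk'_apply] at hms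
    rw [hx, WF, hms, ipF]
    exact Finset.sum_congr rfl fun y _ => hsm _ _
  have id_split : ipF F c r = s + ipF F c ρ := by
    have hrdecomp : r = h.TF F e c + ρ := by rw [hρ]; abel
    have h1 : ipF F c r = ipF F c (h.TF F e c) + ipF F c ρ := by
      conv_lhs => rw [hrdecomp]
      exact ip_add_right F c (h.TF F e c) ρ
    rw [h1, ip_c_T h F e c, ← hx, ← hgdef, ← hPdef, ← hsdef]
  -- norm bound for s
  set δ : ℝ := ‖ipF F c ρ‖ with hδdef
  have hδ0 : 0 ≤ δ := norm_nonneg _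
  have hδ : δ ≤ (F.card : ℝ)*(SN/e)*SN * q^k := by
    have h1 := norm_ip_le F c ρ
    have h2 : ∑ y ∈ F, ‖c y‖ * ‖ρ y‖ ≤ ∑ y ∈ F, (SN/e) * (q^k * SN) := by
      refine Finset.sum_le_sum fun y hy => ?_
      exact mul_le_mul (hc_entry' k y hy) (hrho_entry k y hy) (norm_nonneg _) (by positivity)
    have h3 : ∑ y ∈ F, (SN/e) * (q^k * SN) = (F.card : ℝ) * ((SN/e) * (q^k * SN)) := by
      rw [Finset.sum_const, nsmul_eq_mul]
    have h4 : (F.card : ℝ) * ((SN/e) * (q^k * SN)) = (F.card : ℝ)*(SN/e)*SN * q^k := by ring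
    calc δ ≤ ∑ y ∈ F, ‖c y‖ * ‖ρ y‖ := h1
      _ ≤ ∑ y ∈ F, (SN/e) * (q^k * SN) := h2
      _ = (F.card : ℝ)*(SN/e)*SN * q^k := by rw [h3, h4]
  have hδm : δ ≤ m^2 := le_trans hδ hk2
  have hsqδ : Real.sqrt δ ≤ m := by
    calc Real.sqrt δ ≤ Real.sqrt (m^2) := Real.sqrt_le_sqrt hδm
      _ = m := Real.sqrt_sq hm0.le
  have hsqδ0 : 0 ≤ Real.sqrt δ := Real.sqrt_nonneg _
  have hsqδδ : Real.sqrt δ * Real.sqrt δ = δ := Real.mul_self_sqrt hδ0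
  -- ‖s‖ ≤ C‖x‖ + δ
  have hs_norm : ‖s‖ ≤ C * ‖x‖ + δ := by
    have h1 : s = r x - ipF F c ρ := by rw [id_rx, id_split]; abel
    calc ‖s‖ = ‖r x - ipF F c ρ‖ := by rw [h1]
      _ ≤ ‖r x‖ + ‖ipF F c ρ‖ := norm_sub_le _ _
      _ ≤ C * ‖x‖ + δ := add_le_add (hC x) le_rfl
  have hgs : g ≤ s := le_add_of_nonneg_right (smul_nonneg he.le hP0)
  have hxnorm2 : ‖x‖^2 ≤ ‖s‖ := by
    rw [← h.norm_inner_self x]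
    exact CStarAlgebra.norm_le_norm_of_nonneg_of_le hg0 hgs
  set v : ℝ := Real.sqrt ‖s‖ with hv
  have hv0 : 0 ≤ v := Real.sqrt_nonneg _
  have hv2 : v^2 = ‖s‖ := Real.sq_sqrt (norm_nonneg _)
  have hxv : ‖x‖ ≤ v := by
    refine sq_le_imp hv0 ?_ (norm_nonneg _)
    rw [hv2]; exact hxnorm2
  have hvCδ : v ≤ C + Real.sqrt δ := by
    by_contra hcon
    push_neg at hcon
    have h1 : v^2 ≤ C * v + δ := by
      have h2 : C * ‖x‖ ≤ C * v := mul_le_mul_of_nonneg_left hxv hC0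
      rw [hv2]; linarith only [hs_norm, h2]
    have hA : 0 < v - (C + Real.sqrt δ) := by linarith only [hcon]
    have hB : 0 < v - Real.sqrt δ := by linarith only [hcon, hC0]
    have P1 := mul_pos hA hB
    have P2 := mul_nonneg hsqδ0 hA.le
    have P3 := mul_nonneg hC0 hsqδ0
    have h1' : v*v ≤ C*v + δ := by
      have : v^2 = v*v := sq v
      linarith only [h1, this]
    nlinarith only [h1', P1, P2, P3, hsqδδ]
  -- entry bound for c in terms of s
  have hc_s : ∀ y ∈ F, e * ‖c y‖ ≤ Real.sqrt e * v := by
    intro y hy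
    have h1 : e • (star (c y) * c y) ≤ e • P :=
      smul_le_smul_of_nonneg_left (entry_le_ip F c hy) he.le
    have h2 : e • (star (c y) * c y) ≤ s := by
      calc e • (star (c y) * c y) ≤ e • P := h1
        _ ≤ g + e • P := le_add_of_nonneg_left hg0
        _ = s := hsdef.symm
    have h3 : ‖e • (star (c y) * c y)‖ ≤ ‖s‖ := by
      refine CStarAlgebra.norm_le_norm_of_nonneg_of_le ?_ h2
      exact smul_nonneg he.le (star_mul_self_nonneg _)
    have h4 : e * ‖c y‖^2 ≤ ‖s‖ := by
      rw [norm_smul, Real.norm_eq_abs, abs_of_nonneg he.le, CStarRing.norm_star_mul_self,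
        ← pow_two] at h3
      exact h3
    have hse : Real.sqrt e * Real.sqrt e = e := Real.mul_self_sqrt he.le
    have hse0 : 0 ≤ Real.sqrt e := Real.sqrt_nonneg _
    have h5 : Real.sqrt e * ‖c y‖ ≤ v := by
      refine sq_le_imp hv0 ?_ (by positivity)
      rw [hv2, mul_pow]
      calc Real.sqrt e ^2 * ‖c y‖^2 = e * ‖c y‖^2 := by rw [pow_two, hse]
        _ ≤ ‖s‖ := h4
    calc e * ‖c y‖ = Real.sqrt e * (Real.sqrt e * ‖c y‖) := by rw [← mul_assoc, hse]
      _ ≤ Real.sqrt e * v := mul_le_mul_of_nonneg_left h5 hse0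
  refine ⟨x, ?_, ?_⟩
  · -- norm bound
    have h1 : Real.sqrt δ ≤ ε := le_trans hsqδ (min_le_right _ _)
    linarith only [hxv, hvCδ, h1]
  · -- approximation bound
    intro y hy
    have herr : h.inner y x - r y = -(e • c y) - ρ y := by
      have h1 : h.inner y x = h.PhiF F c y := inner_WF_right h F c y
      have h2 : r y = h.PhiF F c y + e • c y + ρ y := by
        have hh : r = h.TF F e c + ρ := by rw [hρ]; abel
        have h3 : r y = (h.TF F e c + ρ) y := by rw [← hh]
        rw [h3]
        simp only [Pi.add_apply, TF, Pi.smul_apply]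
      rw [h1, h2]
      abel
    rw [herr]
    have h1 : ‖-(e • c y) - ρ y‖ ≤ e * ‖c y‖ + ‖ρ y‖ := by
      refine le_trans (norm_sub_le _ _) ?_
      rw [norm_neg, norm_smul, Real.norm_eq_abs, abs_of_nonneg he.le]
    have h2 : e * ‖c y‖ ≤ Real.sqrt e * v := hc_s y hy
    have h3 : ‖ρ y‖ ≤ q^k * SN := hrho_entry k y hy
    have h4 : Real.sqrt e * v ≤ (ε/(2*(C+2))) * (C + 1) := by
      have hv1 : v ≤ C + 1 := by
        have hδ1 : Real.sqrt δ ≤ 1 := le_trans hsqδ (min_le_left _ _)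
        linarith only [hvCδ, hδ1]
      exact mul_le_mul hsqrt_e hv1 hv0 (by positivity)
    have h5 : (ε/(2*(C+2))) * (C + 1) ≤ ε/2 := by
      rw [div_mul_eq_mul_div, div_le_div_iff₀ (by positivity) (by norm_num)]
      nlinarith only [hε, hC0]
    linarith only [h1, h2, h3, h4, h5, hk1]

end KeyDev3
end LeftHilbertModule

namespace LeftHilbertModule
section Assemble
variable {A : Type*} [CStarAlgebra A] {M : Type*} [NormedAddCommGroup M] [Module A M]

/-- Construct a right *-strictly convergent filter from finite approximability. -/
lemma approx_filter_exists (h : LeftHilbertModule A M) (r : M → A) (C : ℝ)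
    (happrox : ∀ (F : Finset M) (ε : ℝ), 0 < ε →
      ∃ x : M, ‖x‖ ≤ C ∧ ∀ y ∈ F, ‖h.inner y x - r y‖ ≤ ε) :
    ∃ l : Filter M, l.NeBot ∧ l ≤ Filter.principal {x : M | ‖x‖ ≤ C} ∧
      ∀ y : M, Filter.Tendsto (fun x : M => h.inner y x) l (nhds (r y)) := by
  classical
  set ι := Finset M × {e : ℝ // 0 < e} with hι
  have : Nonempty ι := ⟨⟨∅, ⟨1, one_pos⟩⟩⟩
  set S : ι → Set M :=
    fun p => {x : M | ‖x‖ ≤ C ∧ ∀ y ∈ p.1, ‖h.inner y x - r y‖ ≤ p.2.1} with hS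
  have hdir : Directed (· ≥ ·) (fun p : ι => Filter.principal (S p)) := by
    intro p q
    refine ⟨⟨p.1 ∪ q.1, ⟨min p.2.1 q.2.1, lt_min p.2.2 q.2.2⟩⟩, ?_, ?_⟩
    · refine Filter.principal_mono.mpr fun x hx => ⟨hx.1, fun y hy => ?_⟩
      exact le_trans (hx.2 y (Finset.mem_union_left _ hy)) (min_le_left _ _)
    · refine Filter.principal_mono.mpr fun x hx => ⟨hx.1, fun y hy => ?_⟩
      exact le_trans (hx.2 y (Finset.mem_union_right _ hy)) (min_le_right _ _)
  set l : Filter M := ⨅ p : ι, Filter.principal (S p) with hl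
  have hne : ∀ p : ι, (Filter.principal (S p)).NeBot := by
    intro p
    rw [Filter.principal_neBot_iff]
    obtain ⟨x, hx1, hx2⟩ := happrox p.1 p.2.1 p.2.2
    exact ⟨x, hx1, hx2⟩
  have hlne : l.NeBot := Filter.iInf_neBot_of_directed hdir hne
  have hmem : ∀ p : ι, S p ∈ l := fun p => Filter.le_principal_iff.mp (iInf_le _ p)
  refine ⟨l, hlne, ?_, ?_⟩
  · refine le_trans (iInf_le _ (⟨∅, ⟨1, one_pos⟩⟩ : ι)) ?_
    exact Filter.principal_mono.mpr fun x hx => hx.1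
  · intro y
    rw [Metric.tendsto_nhds]
    intro ε hε
    have hp : S ⟨{y}, ⟨ε/2, by linarith⟩⟩ ∈ l := hmem _
    refine Filter.mem_of_superset hp fun x hx => ?_
    have := hx.2 y (Finset.mem_singleton_self y)
    show dist (h.inner y x) (r y) < ε
    rw [dist_eq_norm]
    calc ‖h.inner y x - r y‖ ≤ ε/2 := this
      _ < ε := by linarith

/-- From a bounded right *-strictly fundamental filter, construct the limit functional. -/
lemma limit_functional (h : LeftHilbertModule A M) (l : Filter M) (C : ℝ)
    (hne : l.NeBot) (hle : l ≤ Filter.principal {x : M | ‖x‖ ≤ C})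
    (hcauchy : ∀ y : M, Cauchy (l.map (fun x : M => h.inner y x))) :
    ∃ r : M → A, IsBddModuleMap A r ∧
      ∀ y : M, Filter.Tendsto (fun x : M => h.inner y x) l (nhds (r y)) := by
  have hball : ∀ᶠ x in l, ‖x‖ ≤ C := hle (by simp [Filter.mem_principal])
  obtain ⟨x₀, hx₀⟩ := hball.exists (f := l)
  have hC0 : 0 ≤ C := le_trans (norm_nonneg x₀) hx₀
  have hex : ∀ y : M, ∃ a : A, Filter.Tendsto (fun x : M => h.inner y x) l (nhds a) := by
    intro y
    obtain ⟨a, ha⟩ := CompleteSpace.complete (hcauchy y)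
    exact ⟨a, ha⟩
  choose r hr using hex
  haveI := hne
  refine ⟨r, ⟨?_, ?_, ⟨C, ?_⟩⟩, hr⟩
  · intro y z
    refine tendsto_nhds_unique (hr (y + z)) ?_
    have := (hr y).add (hr z)
    have heq : (fun x : M => h.inner y x + h.inner z x) = fun x => h.inner (y + z) x := by
      funext x
      rw [h.inner_add_left]
    rwa [heq] at this
  · intro a y
    refine tendsto_nhds_unique (hr (a • y)) ?_
    have : Filter.Tendsto (fun x : M => a * h.inner y x) l (nhds (a * r y)) :=
      (hr y).const_mul a
    have heq : (fun x : M => a * h.inner y x) = fun x => h.inner (a • y) x := by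
      funext x
      rw [h.inner_smul_left]
    rw [heq] at this
    rw [smul_eq_mul]
    exact this
  · intro y
    have hev : ∀ᶠ x in l, ‖h.inner y x‖ ≤ C * ‖y‖ := by
      refine hball.mono fun x hx => ?_
      calc ‖h.inner y x‖ ≤ ‖y‖ * ‖x‖ := h.norm_inner_le y x
        _ ≤ ‖y‖ * C := mul_le_mul_of_nonneg_left hx (norm_nonneg y)
        _ = C * ‖y‖ := mul_comm _ _
    exact le_of_tendsto ((hr y).norm) hev

/-- From `IsBddModuleMap` extract a nonnegative bound and the algebraic laws. -/
lemma bdd_unpack {r : M → A} (hr : IsBddModuleMap A r) :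
    (∀ x y, r (x + y) = r x + r y) ∧ (∀ (a : A) (x : M), r (a • x) = a * r x) ∧
      ∃ C : ℝ, 0 ≤ C ∧ ∀ x, ‖r x‖ ≤ C * ‖x‖ := by
  obtain ⟨hadd, hsm, C, hC⟩ := hr
  refine ⟨hadd, fun a x => by rw [hsm, smul_eq_mul], ⟨max C 0, le_max_right _ _, fun x => ?_⟩⟩
  calc ‖r x‖ ≤ C * ‖x‖ := hC x
    _ ≤ max C 0 * ‖x‖ := mul_le_mul_of_nonneg_right (le_max_left _ _) (norm_nonneg x)

end Assemble
end LeftHilbertModule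

open LeftHilbertModule in
/-- A Hilbert C*-module `M` is self-dual iff its unit ball is
complete with respect to the right *-strict topology (formulated via filters,
playing the role of nets: every nonzero filter supported in the unit ball all
of whose inner-product images are Cauchy converges right *-strictly to an
element of `M`).  Moreover, the `A`-dual `M'` is the linear hull of the right
*-strict completion of the unit ball: every bounded module functional is the
right *-strict limit of a norm-bounded net from `M`, and every norm-bounded
right *-strictly fundamental net converges to a bounded module functional. -/
theorem selfDual_iff_ball_strictly_complete
    {A : Type*} [CStarAlgebra A]
    {M : Type*} [NormedAddCommGroup M] [Module A M] [CompleteSpace M]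
    (h : LeftHilbertModule A M) :
    (h.SelfDual ↔
      ∀ l : Filter M, l.NeBot → l ≤ Filter.principal {x : M | ‖x‖ ≤ 1} →
        (∀ y : M, Cauchy (l.map (fun x : M => h.inner y x))) →
        ∃ x₀ : M, ∀ y : M,
          Filter.Tendsto (fun x : M => h.inner y x) l (nhds (h.inner y x₀))) ∧
    (∀ r : M → A, IsBddModuleMap A r →
      ∃ (l : Filter M) (C : ℝ), l.NeBot ∧ l ≤ Filter.principal {x : M | ‖x‖ ≤ C} ∧
        ∀ y : M, Filter.Tendsto (fun x : M => h.inner y x) l (nhds (r y))) ∧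
    (∀ (l : Filter M) (C : ℝ), l.NeBot → l ≤ Filter.principal {x : M | ‖x‖ ≤ C} →
      (∀ y : M, Cauchy (l.map (fun x : M => h.inner y x))) →
      ∃ r : M → A, IsBddModuleMap A r ∧
        ∀ y : M, Filter.Tendsto (fun x : M => h.inner y x) l (nhds (r y))) := by
  have part3 : ∀ (l : Filter M) (C : ℝ), l.NeBot → l ≤ Filter.principal {x : M | ‖x‖ ≤ C} →
      (∀ y : M, Cauchy (l.map (fun x : M => h.inner y x))) →
      ∃ r : M → A, IsBddModuleMap A r ∧
        ∀ y : M, Filter.Tendsto (fun x : M => h.inner y x) l (nhds (r y)) :=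
    fun l C hne hle hc => h.limit_functional l C hne hle hc
  have part2 : ∀ r : M → A, IsBddModuleMap A r →
      ∃ (l : Filter M) (C : ℝ), l.NeBot ∧ l ≤ Filter.principal {x : M | ‖x‖ ≤ C} ∧
        ∀ y : M, Filter.Tendsto (fun x : M => h.inner y x) l (nhds (r y)) := by
    intro r hr
    obtain ⟨hadd, hsm, C, hC0, hC⟩ := bdd_unpack hr
    have happrox : ∀ (F : Finset M) (ε : ℝ), 0 < ε →
        ∃ x : M, ‖x‖ ≤ C + 1 ∧ ∀ y ∈ F, ‖h.inner y x - r y‖ ≤ ε := by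
      intro F ε hε
      obtain ⟨x, hx1, hx2⟩ := h.key_approx r hadd hsm C hC0 hC F (lt_min hε one_pos)
      refine ⟨x, ?_, fun y hy => le_trans (hx2 y hy) (min_le_left _ _)⟩
      have := min_le_right ε 1
      linarith
    obtain ⟨l, hlne, hlle, hltend⟩ := h.approx_filter_exists r (C+1) happrox
    exact ⟨l, C+1, hlne, hlle, hltend⟩
  refine ⟨⟨?_, ?_⟩, part2, part3⟩
  · -- self-duality implies strict completeness of the unit ball
    intro hsd l hne hle hc
    obtain ⟨r, hrbdd, hrtend⟩ := part3 l 1 hne hle hc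
    obtain ⟨x₀, hx₀⟩ := hsd r hrbdd
    exact ⟨x₀, fun y => by rw [← hx₀ y]; exact hrtend y⟩
  · -- strict completeness of the unit ball implies self-duality
    intro hcomp r hr
    obtain ⟨hadd, hsm, C, hC0, hC⟩ := bdd_unpack hr
    have hC1 : (0:ℝ) < C + 1 := by linarith
    set r' : M → A := fun y => ((C+1)⁻¹ : ℝ) • r y with hr'
    have hadd' : ∀ x y, r' (x + y) = r' x + r' y := by
      intro x y
      simp only [hr', hadd, smul_add]
    have hsm' : ∀ (a : A) (x : M), r' (a • x) = a * r' x := by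
      intro a x
      simp only [hr', hsm, mul_smul_comm]
    set C₁ : ℝ := C / (C+1) with hC₁
    have hC₁0 : 0 ≤ C₁ := div_nonneg hC0 hC1.le
    have hC₁1 : C₁ < 1 := (div_lt_one hC1).mpr (by linarith)
    have hC' : ∀ x, ‖r' x‖ ≤ C₁ * ‖x‖ := by
      intro x
      have h1 : ‖r' x‖ = (C+1)⁻¹ * ‖r x‖ := by
        simp only [hr', norm_smul, Real.norm_eq_abs, abs_of_nonneg (inv_nonneg.mpr hC1.le)]
      have h2 : (C+1)⁻¹ * ‖r x‖ ≤ (C+1)⁻¹ * (C * ‖x‖) :=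
        mul_le_mul_of_nonneg_left (hC x) (inv_nonneg.mpr hC1.le)
      have h3 : (C+1)⁻¹ * (C * ‖x‖) = C₁ * ‖x‖ := by
        rw [hC₁]; ring
      rw [h1, ← h3]
      exact h2
    have happrox : ∀ (F : Finset M) (ε : ℝ), 0 < ε →
        ∃ x : M, ‖x‖ ≤ 1 ∧ ∀ y ∈ F, ‖h.inner y x - r' y‖ ≤ ε := by
      intro F ε hε
      have hδ : 0 < min ε (1 - C₁) := lt_min hε (by linarith)
      obtain ⟨x, hx1, hx2⟩ := h.key_approx r' hadd' hsm' C₁ hC₁0 hC' F hδ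
      refine ⟨x, ?_, fun y hy => le_trans (hx2 y hy) (min_le_left _ _)⟩
      have := min_le_right ε (1 - C₁)
      linarith
    obtain ⟨l, hlne, hlle, hltend⟩ := h.approx_filter_exists r' 1 happrox
    haveI := hlne
    have hcau : ∀ y : M, Cauchy (l.map fun x => h.inner y x) := fun y => (hltend y).cauchy_map
    obtain ⟨x₀, hx₀⟩ := hcomp l hlne hlle hcau
    refine ⟨(((C+1 : ℝ)) • (1:A)) • x₀, fun y => ?_⟩
    have huniq : r' y = h.inner y x₀ := tendsto_nhds_unique (hltend y) (hx₀ y)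
    have h1 : h.inner y ((((C+1:ℝ)) • (1:A)) • x₀)
        = h.inner y x₀ * star (((C+1:ℝ)) • (1:A)) := h.inner_smul_right' _ y x₀
    rw [h1, star_smul, star_trivial, star_one, mul_smul_comm, mul_one, ← huniq, hr']
    show r y = (C+1) • ((C+1)⁻¹ • r y)
    rw [smul_smul, mul_inv_cancel₀ hC1.ne', one_smul]
end

section
/- Let A be a C*-algebra and D a norm-closed left ideal of A, regarded as a Hilbert A-module with the standard inner product ⟨a,b⟩_A = a·b*. Then D is self-dual if and only if there exists a projection p ∈ A such that D = Ap and p ∈ D. -/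
open Filter Topology

/-- A norm-closed left ideal `D` of a C*-algebra `A`,
regarded as a Hilbert `A`-module with the standard inner product
`⟨a,b⟩ = a b*`, is self-dual iff there is a projection `p ∈ A` with `D = Ap`
and `p ∈ D`. -/
theorem ideal_selfDual_iff_projection
    {A : Type*} [CStarAlgebra A]
    (D : Submodule A A) (hD : IsClosed (D : Set A)) :
    ((selfModule A).restrict D).SelfDual ↔
      ∃ p : A, IsSelfAdjoint p ∧ IsIdempotentElem p ∧ p ∈ D ∧
        (D : Set A) = {x : A | ∃ a : A, x = a * p} := by
  constructor
  · intro hsd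
    have hval : IsBddModuleMap A (fun y : D => (y : A)) := by
      refine ⟨fun x y => rfl, fun a x => rfl, 1, fun x => ?_⟩
      simp
    obtain ⟨x, hx⟩ := hsd _ hval
    have key : ∀ y : D, (y : A) = (y : A) * star (x : A) := fun y => hx y
    have hxx : (x : A) = (x : A) * star (x : A) := key x
    have hsa : star (x : A) = (x : A) := by
      calc star (x : A) = star ((x : A) * star (x : A)) := by rw [← hxx]
        _ = (x : A) * star (x : A) := by rw [star_mul, star_star]
        _ = (x : A) := hxx.symm
    refine ⟨(x : A), hsa, ?_, x.2, ?_⟩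
    · show (x : A) * (x : A) = (x : A)
      calc (x : A) * (x : A) = (x : A) * star (x : A) := by rw [hsa]
        _ = (x : A) := hxx.symm
    · ext y
      constructor
      · intro hy
        refine ⟨y, ?_⟩
        have := key ⟨y, hy⟩
        rwa [hsa] at this
      · rintro ⟨a, rfl⟩
        exact D.smul_mem a x.2
  · rintro ⟨p, hpsa, hpid, hpD, hDset⟩ r hr
    have hyp : ∀ y : A, y ∈ D → y * p = y := by
      intro y hy
      obtain ⟨a, rfl⟩ : ∃ a : A, y = a * p := by
        have : y ∈ {x : A | ∃ a : A, x = a * p} := hDset ▸ hy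
        exact this
      rw [mul_assoc, hpid]
    set pD : (D : Submodule A A) := ⟨p, hpD⟩ with hpDdef
    have hmem : star (r pD) * p ∈ D := D.smul_mem (star (r pD)) hpD
    refine ⟨⟨star (r pD) * p, hmem⟩, ?_⟩
    intro y
    have h1 : (y : A) • pD = y := by
      ext
      show (y : A) * p = (y : A)
      exact hyp _ y.2
    have h2 : r y = (y : A) * r pD := by
      conv_lhs => rw [← h1]
      rw [hr.2.1, smul_eq_mul]
    show r y = (y : A) * star (star (r pD) * p)
    rw [h2, star_mul, star_star, hpsa.star_eq, ← mul_assoc, hyp _ y.2]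
end
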